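/- Let $n \ge 1$ and let $X_1, X_2$ be independent random variables, each uniformly distributed on $\Delta^{n,u}$. Then the probability that $X_1$ and $X_2$ are comparable with respect to first order stochastic dominance (i.e., $X_1 \le_s X_2$ or $X_2 \le_s X_1$) equals $\frac{2}{n+1}$. -/

import Mathlib

open MeasureTheory Finset ENNReal

namespace FosdAux

open Module NNReal Fin.NatCast


variable {n : ℕ}

/-- prefix sums of `D` viewed cyclically. -/
noncomputable def pre (D : Fin (n+1) → ℝ) (t : ℕ) : ℝ := ∑ s ∈ Finset.range t, D s

lemma pre_add_period (D : Fin (n+1) → ℝ) (hD : ∑ i, D i = 0) (t : ℕ) :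
    pre D (t + (n+1)) = pre D t := by
  unfold pre
  rw [Finset.sum_range_add]
  have : ∑ s ∈ Finset.range (n+1), D ((t + s : ℕ)) = ∑ i : Fin (n+1), D ((t : Fin (n+1)) + i) := by
    rw [← Fin.sum_univ_eq_sum_range (fun s : ℕ => D ((t + s : ℕ)))]
    refine Finset.sum_congr rfl fun i _ => ?_
    congr 1
    push_cast [Fin.cast_val_eq_self]
    ring
  rw [this]
  have h2 : ∑ i : Fin (n+1), D ((t : Fin (n+1)) + i) = ∑ i, D i :=
    Fintype.sum_equiv (Equiv.addLeft (t : Fin (n+1))) _ D (fun i => rfl)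
  rw [h2, hD, add_zero]

lemma pre_mod (D : Fin (n+1) → ℝ) (hD : ∑ i, D i = 0) (t : ℕ) :
    pre D t = pre D (t % (n+1)) := by
  induction t using Nat.strong_induction_on with
  | _ t ih =>
    rcases lt_or_ge t (n+1) with h | h
    · rw [Nat.mod_eq_of_lt h]
    · obtain ⟨t', rfl⟩ : ∃ t', t = t' + (n+1) := ⟨t - (n+1), by omega⟩
      rw [pre_add_period D hD, ih t' (by omega), Nat.add_mod_right]

lemma pre_congr_mod (D : Fin (n+1) → ℝ) (hD : ∑ i, D i = 0) {a b : ℕ}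
    (h : a % (n+1) = b % (n+1)) : pre D a = pre D b := by
  rw [pre_mod D hD a, pre_mod D hD b, h]

/-- The cyclic suffix-sum identity. -/
lemma suffix_eq (D : Fin (n+1) → ℝ) (hD : ∑ i, D i = 0) (t : ℕ) (k : Fin (n+1)) :
    ∑ i ∈ Finset.univ.filter (fun i => k ≤ i), D (i + (t : Fin (n+1)))
      = pre D t - pre D (t + k.val) := by
  have h1 : ∑ i ∈ Finset.univ.filter (fun i => k ≤ i), D (i + (t : Fin (n+1)))
      = ∑ s ∈ Finset.Ico k.val (n+1), D ((s + t : ℕ)) := by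
    refine Finset.sum_nbij' (fun i => i.val) (fun s => if h : s < n+1 then ⟨s, h⟩ else 0) ?_ ?_ ?_ ?_ ?_
    · intro i hi
      simp only [mem_filter, mem_univ, true_and] at hi
      simp only [Finset.mem_Ico]
      exact ⟨hi, i.isLt⟩
    · intro s hs
      simp only [Finset.mem_Ico] at hs
      simp only [mem_filter, mem_univ, true_and, dif_pos hs.2]
      exact hs.1
    · intro i hi; simp [i.isLt]
    · intro s hs
      simp only [Finset.mem_Ico] at hs
      simp [show s ≤ n by omega]
    · intro i hi
      congr 1
      have : ((i.val + t : ℕ) : Fin (n+1)) = (i.val : Fin (n+1)) + (t : Fin (n+1)) := by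
        push_cast; ring
      rw [this, Fin.cast_val_eq_self]
  rw [h1]
  have h2 : ∑ s ∈ Finset.Ico k.val (n+1), D ((s + t : ℕ))
      = ∑ s ∈ Finset.Ico (k.val + t) (n+1+t), D (s : Fin (n+1)) := by
    rw [Finset.sum_Ico_eq_sum_range, Finset.sum_Ico_eq_sum_range]
    have : n + 1 + t - (k.val + t) = n + 1 - k.val := by omega
    rw [this]
    refine Finset.sum_congr rfl fun s _ => ?_
    congr 2
    omega
  rw [h2]
  have h3 : pre D (k.val + t) + ∑ s ∈ Finset.Ico (k.val + t) (n+1+t), D (s : Fin (n+1))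
      = pre D (n+1+t) := Finset.sum_range_add_sum_Ico _ (by omega)
  have h4 : pre D (n+1+t) = pre D t := by
    rw [add_comm (n+1) t]; exact pre_add_period D hD t
  have h5 : pre D (k.val + t) = pre D (t + k.val) := by rw [add_comm]
  linarith

/-- Existence of a rotation with weak dominance. -/
lemma exists_weak (D : Fin (n+1) → ℝ) (hD : ∑ i, D i = 0) :
    ∃ j < n + 1, ∀ s : ℕ, pre D (j + s) ≤ pre D j := by
  obtain ⟨j, hj, hmax⟩ := Finset.exists_max_image (Finset.range (n+1)) (pre D)
    ⟨0, Finset.mem_range.2 (by omega)⟩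
  refine ⟨j, Finset.mem_range.1 hj, fun s => ?_⟩
  rw [pre_mod D hD (j + s)]
  exact hmax _ (Finset.mem_range.2 (Nat.mod_lt _ (by omega)))

/-- Uniqueness of a rotation with strict dominance. -/
lemma strict_unique (D : Fin (n+1) → ℝ) (hD : ∑ i, D i = 0) {j₁ j₂ : ℕ}
    (h₁ : j₁ < n + 1) (h₂ : j₂ < n + 1)
    (H₁ : ∀ s : ℕ, 0 < s → s < n + 1 → pre D (j₁ + s) < pre D j₁)
    (H₂ : ∀ s : ℕ, 0 < s → s < n + 1 → pre D (j₂ + s) < pre D j₂) :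
    j₁ = j₂ := by
  by_contra hne
  wlog hlt : j₁ < j₂ generalizing j₁ j₂
  · exact this h₂ h₁ H₂ H₁ (Ne.symm hne) (by omega)
  have e1 : pre D (j₁ + (j₂ - j₁)) = pre D j₂ := by congr 1; omega
  have e2 : pre D (j₂ + (n + 1 - (j₂ - j₁))) = pre D j₁ := by
    have h : j₂ + (n + 1 - (j₂ - j₁)) = (n + 1) + j₁ := by omega
    rw [h, add_comm (n+1) j₁, pre_add_period D hD]
  have l1 := H₁ (j₂ - j₁) (by omega) (by omega)
  have l2 := H₂ (n + 1 - (j₂ - j₁)) (by omega) (by omega)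
  rw [e1] at l1
  rw [e2] at l2
  linarith



variable {n : ℕ}

/-- the sum functional -/
noncomputable def sumF (n : ℕ) : EuclideanSpace ℝ (Fin (n+1)) →ₗ[ℝ] ℝ where
  toFun x := ∑ i, x i
  map_add' x y := by simp [Finset.sum_add_distrib]
  map_smul' c x := by simp [Finset.mul_sum]

/-- the suffix-sum functional -/
noncomputable def sufF (n : ℕ) (k : Fin (n+1)) : EuclideanSpace ℝ (Fin (n+1)) →ₗ[ℝ] ℝ where
  toFun x := ∑ i ∈ Finset.univ.filter (fun i => k ≤ i), x i
  map_add' x y := by simp [Finset.sum_add_distrib]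
  map_smul' c x := by simp [Finset.mul_sum]

lemma sumF_single (n : ℕ) (j : Fin (n+1)) (a : ℝ) : sumF n (EuclideanSpace.single j a) = a := by
  simp [sumF, EuclideanSpace.single_apply]

lemma sufF_single (n : ℕ) (k : Fin (n+1)) (j : Fin (n+1)) (a : ℝ) :
    sufF n k (EuclideanSpace.single j a) = if k ≤ j then a else 0 := by
  simp only [sufF, LinearMap.coe_mk, AddHom.coe_mk, EuclideanSpace.single_apply]
  rw [Finset.sum_ite_eq' (Finset.univ.filter (fun i => k ≤ i)) j (fun _ => a)]
  simp

lemma slice_null (n : ℕ) (k : Fin (n+1)) (hk : k ≠ 0) (u c : ℝ)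
    (T : Set (EuclideanSpace ℝ (Fin (n+1))))
    (hT : ∀ x ∈ T, ∑ i, x i = u ∧ ∑ i ∈ Finset.univ.filter (fun i => k ≤ i), x i = c) :
    μH[(n : ℝ)] T = 0 := by
  rcases T.eq_empty_or_nonempty with rfl | ⟨w, hw⟩
  · simp
  set V : Submodule ℝ (EuclideanSpace ℝ (Fin (n+1))) :=
    LinearMap.ker (sumF n) ⊓ LinearMap.ker (sufF n k) with hV
  -- the test vector
  set v : EuclideanSpace ℝ (Fin (n+1)) :=
    EuclideanSpace.single k 1 - EuclideanSpace.single 0 1 with hv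
  have hgv : sumF n v = 0 := by
    rw [hv, map_sub, sumF_single, sumF_single]; ring
  have hhv : sufF n k v = 1 := by
    rw [hv, map_sub, sufF_single, sufF_single]
    rw [if_pos le_rfl, if_neg]
    · ring
    · intro h; exact hk (le_antisymm (Fin.le_zero_iff.mp (by exact_mod_cast h) ▸ le_rfl) (Fin.zero_le k))
  have hsub : T ⊆ (fun y => w + y) '' (V : Set (EuclideanSpace ℝ (Fin (n+1)))) := by
    intro x hx
    obtain ⟨hx1, hx2⟩ := hT x hx
    obtain ⟨hw1, hw2⟩ := hT w hw
    refine ⟨x - w, ⟨?_, ?_⟩, by simp⟩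
    · show sumF n (x - w) = 0
      rw [map_sub]
      show (∑ i, x i) - (∑ i, w i) = 0
      rw [hx1, hw1, sub_self]
    · show sufF n k (x - w) = 0
      rw [map_sub]
      show (∑ i ∈ Finset.univ.filter (fun i => k ≤ i), x i)
          - (∑ i ∈ Finset.univ.filter (fun i => k ≤ i), w i) = 0
      rw [hx2, hw2, sub_self]
  have hvker : v ∈ LinearMap.ker (sumF n) := hgv
  have hvnot : v ∉ V := by
    intro hmem
    have : sufF n k v = 0 := hmem.2
    rw [hhv] at this; norm_num at this
  have hlt : V < LinearMap.ker (sumF n) :=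
    lt_of_le_of_ne inf_le_left (fun h => hvnot (h.symm ▸ hvker))
  have hlt2 : LinearMap.ker (sumF n) < ⊤ := by
    rw [lt_top_iff_ne_top]
    intro h
    have : EuclideanSpace.single (0 : Fin (n+1)) (1:ℝ) ∈ LinearMap.ker (sumF n) := by
      rw [h]; trivial
    have h1 : sumF n (EuclideanSpace.single (0 : Fin (n+1)) (1:ℝ)) = 0 := this
    rw [sumF_single] at h1; norm_num at h1
  have hfr : finrank ℝ V < n := by
    have h1 : finrank ℝ V < finrank ℝ (LinearMap.ker (sumF n)) :=
      Submodule.finrank_lt_finrank_of_lt hlt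
    have h2 : finrank ℝ (LinearMap.ker (sumF n)) < finrank ℝ (EuclideanSpace ℝ (Fin (n+1))) :=
      Submodule.finrank_lt hlt2.ne
    have h3 : finrank ℝ (EuclideanSpace ℝ (Fin (n+1))) = n + 1 := finrank_euclideanSpace_fin
    omega
  have hdim : dimH T < ((n : ℝ≥0) : ℝ≥0∞) := by
    calc dimH T ≤ dimH ((fun y => w + y) '' (V : Set (EuclideanSpace ℝ (Fin (n+1))))) :=
          dimH_mono hsub
      _ = dimH (V : Set (EuclideanSpace ℝ (Fin (n+1)))) :=
          (IsometryEquiv.addLeft w).isometry.dimH_image _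
      _ = finrank ℝ V := by
          have h1 : (V : Set (EuclideanSpace ℝ (Fin (n+1)))) = V.subtypeₗᵢ '' Set.univ := by
            rw [Set.image_univ]; simp [Submodule.coe_subtypeₗᵢ]
          rw [h1, V.subtypeₗᵢ.isometry.dimH_image, Real.dimH_univ_eq_finrank]
      _ < ((n : ℝ≥0) : ℝ≥0∞) := by exact_mod_cast hfr
  have := hausdorffMeasure_of_dimH_lt hdim
  simpa using this



/-- the cone linear map `y ↦ (-∑ y, y)` -/
noncomputable def consL (n : ℕ) : (Fin n → ℝ) →ₗ[ℝ] EuclideanSpace ℝ (Fin (n+1)) where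
  toFun y := (WithLp.equiv 2 (Fin (n+1) → ℝ)).symm (Fin.cons (-∑ j, y j) y)
  map_add' x y := by
    apply (WithLp.equiv 2 (Fin (n+1) → ℝ)).injective
    ext i
    induction i using Fin.cases with
    | zero => simp [Finset.sum_add_distrib]; ring
    | succ j => simp
  map_smul' c x := by
    apply (WithLp.equiv 2 (Fin (n+1) → ℝ)).injective
    ext i
    induction i using Fin.cases with
    | zero => simp [Finset.mul_sum]
    | succ j => simp

lemma consL_apply (n : ℕ) (y : Fin n → ℝ) (i : Fin (n+1)) :
    consL n y i = (Fin.cons (-∑ j, y j) y : Fin (n+1) → ℝ) i := rfl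

/-- the affine parametrization -/
noncomputable def paraF (n : ℕ) (u : ℝ) : (Fin n → ℝ) → EuclideanSpace ℝ (Fin (n+1)) :=
  fun y => EuclideanSpace.single (0 : Fin (n+1)) u + consL n y

lemma paraF_apply_zero (n : ℕ) (u : ℝ) (y : Fin n → ℝ) :
    paraF n u y 0 = u - ∑ j, y j := by
  simp [paraF, consL_apply, EuclideanSpace.single_apply]
  ring

lemma paraF_apply_succ (n : ℕ) (u : ℝ) (y : Fin n → ℝ) (j : Fin n) :
    paraF n u y j.succ = y j := by
  simp [paraF, consL_apply, EuclideanSpace.single_apply, Fin.succ_ne_zero]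

lemma paraF_lipschitz (n : ℕ) (u : ℝ) :
    ∃ K : ℝ≥0, LipschitzWith K (paraF n u) := by
  refine ⟨‖(consL n).toContinuousLinearMap‖₊, ?_⟩
  have h1 : LipschitzWith 1 (fun z : EuclideanSpace ℝ (Fin (n+1)) =>
      EuclideanSpace.single (0 : Fin (n+1)) u + z) :=
    (IsometryEquiv.addLeft (EuclideanSpace.single (0 : Fin (n+1)) u)).isometry.lipschitz
  have h2 := (consL n).toContinuousLinearMap.lipschitz
  have := h1.comp h2
  rw [one_mul] at this
  exact this

/-- the projection dropping coordinate 0 -/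
def projP (n : ℕ) : EuclideanSpace ℝ (Fin (n+1)) → (Fin n → ℝ) :=
  fun x => fun j => x j.succ

lemma projP_lipschitz (n : ℕ) : LipschitzWith 1 (projP n) := by
  have h1 : LipschitzWith 1 (WithLp.equiv 2 (Fin (n+1) → ℝ)) := PiLp.lipschitzWith_ofLp 2 _
  have h2 : LipschitzWith 1 (fun (x : Fin (n+1) → ℝ) (j : Fin n) => x j.succ) := by
    refine LipschitzWith.of_dist_le_mul fun x y => ?_
    simp only [NNReal.coe_one, one_mul]
    refine (dist_pi_le_iff dist_nonneg).2 fun j => dist_le_pi_dist x y j.succ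
  have := h2.comp h1
  rw [one_mul] at this
  exact this

lemma measure_bounds (n : ℕ) (hn : 1 ≤ n) (u : ℝ) (hu : 0 < u) :
    μH[(n : ℝ)] {x : EuclideanSpace ℝ (Fin (n+1)) | (∀ i, 0 ≤ x i) ∧ ∑ i, x i = u} ≠ 0 ∧
    μH[(n : ℝ)] {x : EuclideanSpace ℝ (Fin (n+1)) | (∀ i, 0 ≤ x i) ∧ ∑ i, x i = u} ≠ ∞ := by
  set S := {x : EuclideanSpace ℝ (Fin (n+1)) | (∀ i, 0 ≤ x i) ∧ ∑ i, x i = u} with hSdef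
  have hpi : (μH[(n : ℝ)] : Measure (Fin n → ℝ)) = volume := by
    have := hausdorffMeasure_pi_real (ι := Fin n)
    rwa [Fintype.card_fin] at this
  constructor
  · -- positivity
    set B' : Set (Fin n → ℝ) := Set.pi Set.univ (fun _ => Set.Icc 0 (u / n)) with hB'
    have hun : 0 < u / n := by positivity
    have hsub : B' ⊆ projP n '' S := by
      intro y hy
      have hy' : ∀ j, y j ∈ Set.Icc 0 (u / n) := fun j => hy j (Set.mem_univ j)
      have hsum : ∑ j, y j ≤ u := by
        calc ∑ j, y j ≤ ∑ _j : Fin n, (u / n) := Finset.sum_le_sum fun j _ => (hy' j).2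
          _ = n * (u / n) := by rw [Finset.sum_const, Finset.card_fin]; ring
          _ = u := by field_simp
      refine ⟨paraF n u y, ⟨fun i => ?_, ?_⟩, ?_⟩
      · induction i using Fin.cases with
        | zero => rw [paraF_apply_zero]; linarith
        | succ j => rw [paraF_apply_succ]; exact (hy' j).1
      · rw [Fin.sum_univ_succ, paraF_apply_zero]
        have : ∀ j, paraF n u y j.succ = y j := paraF_apply_succ n u y
        rw [Finset.sum_congr rfl fun j _ => this j]
        ring
      · funext j
        exact paraF_apply_succ n u y j
    have h1 : (volume B' : ℝ≥0∞) ≤ μH[(n : ℝ)] S := by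
      calc volume B' = μH[(n : ℝ)] B' := by rw [hpi]
        _ ≤ μH[(n : ℝ)] (projP n '' S) := measure_mono hsub
        _ ≤ (1 : ℝ≥0) ^ (n : ℝ) * μH[(n : ℝ)] S :=
            (projP_lipschitz n).hausdorffMeasure_image_le (by positivity) S
        _ = μH[(n : ℝ)] S := by simp
    have h2 : (0 : ℝ≥0∞) < volume B' := by
      rw [hB', volume_pi_pi]
      simp only [Real.volume_Icc, sub_zero]
      rw [Finset.prod_const, Finset.card_fin]
      exact ENNReal.pow_pos (ENNReal.ofReal_pos.2 hun) n
    intro h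
    rw [h] at h1
    exact h2.not_ge h1
  · -- finiteness
    obtain ⟨K, hK⟩ := paraF_lipschitz n u
    set B : Set (Fin n → ℝ) := Set.pi Set.univ (fun _ => Set.Icc 0 u) with hB
    have hsub : S ⊆ paraF n u '' (projP n '' S) := by
      intro x hx
      refine ⟨projP n x, Set.mem_image_of_mem _ hx, ?_⟩
      ext i
      induction i using Fin.cases with
      | zero =>
        rw [paraF_apply_zero]
        have : ∑ j, projP n x j = u - x 0 := by
          have := hx.2
          rw [Fin.sum_univ_succ] at this
          simp only [projP]
          linarith
        rw [this]; ring
      | succ j => rw [paraF_apply_succ]; rfl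
    have himgsub : projP n '' S ⊆ B := by
      rintro _ ⟨x, hx, rfl⟩
      intro j _
      refine ⟨hx.1 j.succ, ?_⟩
      calc x j.succ ≤ ∑ i, x i :=
            Finset.single_le_sum (fun i _ => hx.1 i) (Finset.mem_univ j.succ)
        _ = u := hx.2
    have h1 : μH[(n : ℝ)] S ≤ (K : ℝ≥0∞) ^ (n : ℝ) * μH[(n : ℝ)] B := by
      calc μH[(n : ℝ)] S ≤ μH[(n : ℝ)] (paraF n u '' B) :=
            measure_mono (hsub.trans (Set.image_mono himgsub))
        _ ≤ (K : ℝ≥0∞) ^ (n : ℝ) * μH[(n : ℝ)] B :=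
            hK.hausdorffMeasure_image_le (by positivity) B
    have h2 : μH[(n : ℝ)] B < ∞ := by
      rw [hpi, hB, volume_pi_pi]
      simp only [Real.volume_Icc, sub_zero]
      rw [Finset.prod_const, Finset.card_fin]
      exact ENNReal.pow_lt_top ENNReal.ofReal_lt_top
    intro h
    rw [h] at h1
    have : (K : ℝ≥0∞) ^ (n : ℝ) * μH[(n : ℝ)] B ≠ ∞ :=
      ENNReal.mul_ne_top (ENNReal.rpow_ne_top_of_nonneg (by positivity) ENNReal.coe_ne_top) h2.ne
    exact this (top_le_iff.1 h1)


/-- rotation by `t` -/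
noncomputable def rot (n : ℕ) (t : ℕ) :
    EuclideanSpace ℝ (Fin (n+1)) ≃ₗᵢ[ℝ] EuclideanSpace ℝ (Fin (n+1)) :=
  LinearIsometryEquiv.piLpCongrLeft 2 ℝ ℝ (Equiv.subRight ((t : Fin (n+1))))

lemma rot_apply {n : ℕ} (t : ℕ) (x : EuclideanSpace ℝ (Fin (n+1))) (i : Fin (n+1)) :
    rot n t x i = x (i + (t : Fin (n+1))) := by
  simp [rot, LinearIsometryEquiv.piLpCongrLeft_apply, Equiv.piCongrLeft'_apply]

/-- suffix sum -/
noncomputable def suf (n : ℕ) (k : Fin (n+1)) (x : EuclideanSpace ℝ (Fin (n+1))) : ℝ :=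
  ∑ i ∈ Finset.univ.filter (fun i => k ≤ i), x i

lemma suf_continuous (n : ℕ) (k : Fin (n+1)) : Continuous (suf n k) :=
  continuous_finset_sum _ (fun i _ => (continuous_apply i).comp (PiLp.continuous_ofLp 2 _))

lemma bridge (n : ℕ) (x y : EuclideanSpace ℝ (Fin (n+1))) (hxy : ∑ i, (y i - x i) = 0)
    (t : ℕ) (k : Fin (n+1)) :
    suf n k (rot n t y) - suf n k (rot n t x)
      = pre (fun i => y i - x i) t - pre (fun i => y i - x i) (t + k.val) := by
  unfold suf
  rw [← Finset.sum_sub_distrib]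
  have h : ∀ i, rot n t y i - rot n t x i = (fun i => y i - x i) (i + (t : Fin (n+1))) := by
    intro i; rw [rot_apply, rot_apply]
  rw [Finset.sum_congr rfl (fun i _ => h i)]
  exact suffix_eq _ hxy t k

lemma claim_exists (n : ℕ) (x y : EuclideanSpace ℝ (Fin (n+1)))
    (hxy : ∑ i, (y i - x i) = 0) :
    ∃ t < n + 1, ∀ k : Fin (n+1), suf n k (rot n t x) ≤ suf n k (rot n t y) := by
  obtain ⟨j, hj, hmax⟩ := exists_weak (fun i => y i - x i) hxy
  refine ⟨j, hj, fun k => ?_⟩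
  have hb := bridge n x y hxy j k
  have hm := hmax k.val
  linarith

lemma claim_unique (n : ℕ) (x y : EuclideanSpace ℝ (Fin (n+1)))
    (hxy : ∑ i, (y i - x i) = 0) {t₁ t₂ : ℕ} (h₁ : t₁ < n + 1) (h₂ : t₂ < n + 1)
    (H₁ : ∀ k : Fin (n+1), k ≠ 0 → suf n k (rot n t₁ x) < suf n k (rot n t₁ y))
    (H₂ : ∀ k : Fin (n+1), k ≠ 0 → suf n k (rot n t₂ x) < suf n k (rot n t₂ y)) :
    t₁ = t₂ := by
  refine strict_unique (fun i => y i - x i) hxy h₁ h₂ ?_ ?_ <;>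
  · intro s hs1 hs2
    first
    | (have hb := bridge n x y hxy t₁ ⟨s, hs2⟩
       have := H₁ ⟨s, hs2⟩ (by simp only [ne_eq, Fin.ext_iff, Fin.val_mk, Fin.val_zero]; omega)
       simp only [Fin.val_mk] at hb ⊢
       linarith)
    | (have hb := bridge n x y hxy t₂ ⟨s, hs2⟩
       have := H₂ ⟨s, hs2⟩ (by simp only [ne_eq, Fin.ext_iff, Fin.val_mk, Fin.val_zero]; omega)
       simp only [Fin.val_mk] at hb ⊢
       linarith)

end FosdAux

open FosdAux Module Fin.NatCast

/-- The probability that two independent uniform points on the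
`n`-probability simplex are comparable with respect to first order
stochastic dominance is `2/(n+1)`. -/
theorem prob_fosd_comparable (n : ℕ) (hn : 1 ≤ n) (u : ℝ) (hu : 0 < u)
    (S : Set (EuclideanSpace ℝ (Fin (n + 1))))
    (hS : S = {x | (∀ i, 0 ≤ x i) ∧ ∑ i, x i = u})
    (μ : Measure (EuclideanSpace ℝ (Fin (n + 1))))
    (hμ : μ = (μH[(n : ℝ)] S)⁻¹ • (μH[(n : ℝ)]).restrict S) :
    (μ.prod μ) {p : EuclideanSpace ℝ (Fin (n + 1)) × EuclideanSpace ℝ (Fin (n + 1)) |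
        (∀ k : Fin (n + 1), ∑ i ∈ Finset.univ.filter (fun i => k ≤ i), p.1 i ≤
            ∑ i ∈ Finset.univ.filter (fun i => k ≤ i), p.2 i) ∨
        (∀ k : Fin (n + 1), ∑ i ∈ Finset.univ.filter (fun i => k ≤ i), p.2 i ≤
            ∑ i ∈ Finset.univ.filter (fun i => k ≤ i), p.1 i)}
      = 2 / ((n : ℝ≥0∞) + 1) := by
  classical
  -- measurability of S
  have hSmeas : MeasurableSet S := by
    rw [hS]
    have h1 : MeasurableSet {x : EuclideanSpace ℝ (Fin (n+1)) | ∀ i, 0 ≤ x i} := by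
      rw [Set.setOf_forall]
      exact MeasurableSet.iInter fun i =>
        measurableSet_le measurable_const ((continuous_apply i).comp (PiLp.continuous_ofLp 2 _)).measurable
    have h2 : MeasurableSet {x : EuclideanSpace ℝ (Fin (n+1)) | ∑ i, x i = u} :=
      measurableSet_eq_fun (continuous_finset_sum _ fun i _ => (continuous_apply i).comp (PiLp.continuous_ofLp 2 _)).measurable
        measurable_const
    exact h1.inter h2
  obtain ⟨hne0, hnetop⟩ := measure_bounds n hn u hu
  rw [← hS] at hne0 hnetop
  -- μ is a probability measure
  have hprob : IsProbabilityMeasure μ := by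
    constructor
    rw [hμ, Measure.smul_apply, Measure.restrict_apply MeasurableSet.univ, Set.univ_inter,
      smul_eq_mul, ENNReal.inv_mul_cancel hne0 hnetop]
  haveI := hprob
  have hμS : μ S = 1 := by
    rw [hμ, Measure.smul_apply, Measure.restrict_apply hSmeas, Set.inter_self, smul_eq_mul,
      ENNReal.inv_mul_cancel hne0 hnetop]
  -- key sets
  set A : Set (EuclideanSpace ℝ (Fin (n+1)) × EuclideanSpace ℝ (Fin (n+1))) :=
    {p | ∀ k, suf n k p.1 ≤ suf n k p.2} with hA
  set A' : Set (EuclideanSpace ℝ (Fin (n+1)) × EuclideanSpace ℝ (Fin (n+1))) :=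
    {p | ∀ k, suf n k p.2 ≤ suf n k p.1} with hA'
  set St : Set (EuclideanSpace ℝ (Fin (n+1)) × EuclideanSpace ℝ (Fin (n+1))) :=
    {p | ∀ k, k ≠ 0 → suf n k p.1 < suf n k p.2} with hSt
  have hgoal : {p : EuclideanSpace ℝ (Fin (n + 1)) × EuclideanSpace ℝ (Fin (n + 1)) |
        (∀ k : Fin (n + 1), ∑ i ∈ Finset.univ.filter (fun i => k ≤ i), p.1 i ≤
            ∑ i ∈ Finset.univ.filter (fun i => k ≤ i), p.2 i) ∨
        (∀ k : Fin (n + 1), ∑ i ∈ Finset.univ.filter (fun i => k ≤ i), p.2 i ≤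
            ∑ i ∈ Finset.univ.filter (fun i => k ≤ i), p.1 i)} = A ∪ A' := rfl
  rw [hgoal]
  -- measurability
  have hsm : ∀ k : Fin (n+1), Measurable fun p :
      EuclideanSpace ℝ (Fin (n+1)) × EuclideanSpace ℝ (Fin (n+1)) => suf n k p.1 :=
    fun k => ((suf_continuous n k).comp continuous_fst).measurable
  have hsm' : ∀ k : Fin (n+1), Measurable fun p :
      EuclideanSpace ℝ (Fin (n+1)) × EuclideanSpace ℝ (Fin (n+1)) => suf n k p.2 :=
    fun k => ((suf_continuous n k).comp continuous_snd).measurable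
  have hAmeas : MeasurableSet A := by
    have : A = ⋂ k, {p : EuclideanSpace ℝ (Fin (n+1)) × EuclideanSpace ℝ (Fin (n+1)) |
        suf n k p.1 ≤ suf n k p.2} := by
      ext p; simp [hA, Set.mem_iInter]
    rw [this]
    exact MeasurableSet.iInter fun k => measurableSet_le (hsm k) (hsm' k)
  have hA'meas : MeasurableSet A' := by
    have : A' = ⋂ k, {p : EuclideanSpace ℝ (Fin (n+1)) × EuclideanSpace ℝ (Fin (n+1)) |
        suf n k p.2 ≤ suf n k p.1} := by
      ext p; simp [hA', Set.mem_iInter]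
    rw [this]
    exact MeasurableSet.iInter fun k => measurableSet_le (hsm' k) (hsm k)
  have hStmeas : MeasurableSet St := by
    have : St = ⋂ k ∈ {k : Fin (n+1) | k ≠ 0},
        {p : EuclideanSpace ℝ (Fin (n+1)) × EuclideanSpace ℝ (Fin (n+1)) |
        suf n k p.1 < suf n k p.2} := by
      ext p; simp [hSt, Set.mem_iInter]
    rw [this]
    exact MeasurableSet.biInter (Set.to_countable _)
      fun k _ => measurableSet_lt (hsm k) (hsm' k)
  -- the null "tie" sets
  have hNmeas : ∀ k : Fin (n+1), MeasurableSet
      {p : EuclideanSpace ℝ (Fin (n+1)) × EuclideanSpace ℝ (Fin (n+1)) |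
        suf n k p.1 = suf n k p.2} :=
    fun k => measurableSet_eq_fun (hsm k) (hsm' k)
  have hNnull : ∀ k : Fin (n+1), k ≠ 0 →
      (μ.prod μ) {p : EuclideanSpace ℝ (Fin (n+1)) × EuclideanSpace ℝ (Fin (n+1)) |
        suf n k p.1 = suf n k p.2} = 0 := by
    intro k hk
    rw [Measure.prod_apply (hNmeas k)]
    have hz : ∀ x : EuclideanSpace ℝ (Fin (n+1)),
        μ (Prod.mk x ⁻¹' {p : EuclideanSpace ℝ (Fin (n+1)) × EuclideanSpace ℝ (Fin (n+1)) |
          suf n k p.1 = suf n k p.2}) = 0 := by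
      intro x
      have hpre : Prod.mk x ⁻¹' {p : EuclideanSpace ℝ (Fin (n+1)) ×
            EuclideanSpace ℝ (Fin (n+1)) | suf n k p.1 = suf n k p.2}
          = {y : EuclideanSpace ℝ (Fin (n+1)) | suf n k y = suf n k x} := by
        ext y
        simp only [Set.mem_preimage, Set.mem_setOf_eq]
        exact eq_comm
      have hymeas : MeasurableSet {y : EuclideanSpace ℝ (Fin (n+1)) | suf n k y = suf n k x} :=
        measurableSet_eq_fun (suf_continuous n k).measurable measurable_const
      rw [hpre, hμ, Measure.smul_apply, Measure.restrict_apply hymeas, smul_eq_mul]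
      have h0 : μH[(n : ℝ)]
          ({y : EuclideanSpace ℝ (Fin (n+1)) | suf n k y = suf n k x} ∩ S) = 0 := by
        apply slice_null n k hk u (suf n k x)
        intro y hy
        refine ⟨(hS ▸ hy.2 : y ∈ {x | (∀ i, 0 ≤ x i) ∧ ∑ i, x i = u}).2, hy.1⟩
      rw [h0, mul_zero]
    simp only [hz, lintegral_zero]
  -- the rotations preserve S and μ
  have hrotS : ∀ t : ℕ, (rot n t) ⁻¹' S = S := by
    intro t
    rw [hS]
    ext x
    have hsum : ∀ z : EuclideanSpace ℝ (Fin (n+1)),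
        ∑ i, z (i + (t : Fin (n+1))) = ∑ i, z i := fun z =>
      Fintype.sum_equiv (Equiv.addRight ((t : Fin (n+1)))) _ z (fun i => rfl)
    simp only [Set.mem_preimage, Set.mem_setOf_eq, rot_apply]
    constructor
    · rintro ⟨h1, h2⟩
      refine ⟨fun i => ?_, by rw [← hsum x]; exact h2⟩
      have := h1 (i - (t : Fin (n+1)))
      rwa [sub_add_cancel] at this
    · rintro ⟨h1, h2⟩
      exact ⟨fun i => h1 _, by rw [hsum x]; exact h2⟩
  have hmp : ∀ t : ℕ, MeasurePreserving (rot n t) μ μ := by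
    intro t
    have h0 : MeasurePreserving (rot n t) μH[(n : ℝ)] μH[(n : ℝ)] :=
      (rot n t).toIsometryEquiv.measurePreserving_hausdorffMeasure _
    have h1 := h0.restrict_preimage hSmeas
    rw [hrotS t] at h1
    exact ⟨h1.measurable, by rw [hμ, Measure.map_smul, h1.map_eq]⟩
  have hmp2 : ∀ t : ℕ, MeasurePreserving (Prod.map (rot n t) (rot n t))
      (μ.prod μ) (μ.prod μ) := fun t => (hmp t).prod (hmp t)
  -- sum facts on S
  have hsubsum : ∀ p : EuclideanSpace ℝ (Fin (n+1)) × EuclideanSpace ℝ (Fin (n+1)),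
      p ∈ S ×ˢ S → ∑ i, (p.2 i - p.1 i) = 0 := by
    intro p hp
    have h1 : ∑ i, p.1 i = u := (hS ▸ hp.1 : p.1 ∈ {x | (∀ i, 0 ≤ x i) ∧ ∑ i, x i = u}).2
    have h2 : ∑ i, p.2 i = u := (hS ▸ hp.2 : p.2 ∈ {x | (∀ i, 0 ≤ x i) ∧ ∑ i, x i = u}).2
    rw [Finset.sum_sub_distrib, h1, h2, sub_self]
  -- G facts
  have hGmeas : MeasurableSet (S ×ˢ S) := hSmeas.prod hSmeas
  have hG1 : (μ.prod μ) (S ×ˢ S) = 1 := by rw [Measure.prod_prod, hμS, mul_one]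
  have hGc : (μ.prod μ) (S ×ˢ S)ᶜ = 0 := by
    rw [measure_compl hGmeas (measure_ne_top _ _), hG1, measure_univ, tsub_self]
  -- Claim 1 : covering
  have hcover : (S ×ˢ S) ⊆ ⋃ t ∈ Finset.range (n+1), Prod.map (rot n t) (rot n t) ⁻¹' A := by
    intro p hp
    obtain ⟨j, hj, hdom⟩ := claim_exists n p.1 p.2 (hsubsum p hp)
    refine Set.mem_biUnion (Finset.mem_range.2 hj) ?_
    intro k
    exact hdom k
  -- Claim 2 : a.e. disjointness of strict rotations
  have hdisj : ∀ t₁ ∈ Finset.range (n+1), ∀ t₂ ∈ Finset.range (n+1), t₁ ≠ t₂ →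
      (S ×ˢ S) ∩ (Prod.map (rot n t₁) (rot n t₁) ⁻¹' St) ∩
        ((S ×ˢ S) ∩ (Prod.map (rot n t₂) (rot n t₂) ⁻¹' St)) = ∅ := by
    intro t₁ h₁ t₂ h₂ hne
    rw [Set.eq_empty_iff_forall_notMem]
    rintro p ⟨⟨hpG, hst1⟩, -, hst2⟩
    have H₁ : ∀ k : Fin (n+1), k ≠ 0 →
        suf n k (rot n t₁ p.1) < suf n k (rot n t₁ p.2) := hst1
    have H₂ : ∀ k : Fin (n+1), k ≠ 0 →
        suf n k (rot n t₂ p.1) < suf n k (rot n t₂ p.2) := hst2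
    exact hne (claim_unique n p.1 p.2 (hsubsum p hpG)
      (Finset.mem_range.1 h₁) (Finset.mem_range.1 h₂) H₁ H₂)
  -- suf at 0 is the total sum
  have hsuf0 : ∀ x : EuclideanSpace ℝ (Fin (n+1)), suf n 0 x = ∑ i, x i := by
    intro x
    unfold FosdAux.suf
    rw [Finset.filter_true_of_mem (fun i _ => Fin.zero_le i)]
  -- strict implies weak on G
  have hStsubA : (S ×ˢ S) ∩ St ⊆ A := by
    rintro p ⟨hpG, hpSt⟩
    intro k
    by_cases hk : k = 0
    · subst hk
      rw [hsuf0, hsuf0,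
        (hS ▸ hpG.1 : p.1 ∈ {x | (∀ i, 0 ≤ x i) ∧ ∑ i, x i = u}).2,
        (hS ▸ hpG.2 : p.2 ∈ {x | (∀ i, 0 ≤ x i) ∧ ∑ i, x i = u}).2]
    · exact le_of_lt (hpSt k hk)
  -- the union of ties is null
  have hUnull : (μ.prod μ) (⋃ k : Fin (n+1),
      {p : EuclideanSpace ℝ (Fin (n+1)) × EuclideanSpace ℝ (Fin (n+1)) |
        k ≠ 0 ∧ suf n k p.1 = suf n k p.2}) = 0 := by
    refine measure_iUnion_null fun k => ?_
    by_cases hk : k = 0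
    · simp [hk]
    · exact measure_mono_null (fun p hp => hp.2) (hNnull k hk)
  -- A ⊆ St ∪ ties
  have hAsub : A ⊆ St ∪ (⋃ k : Fin (n+1),
      {p : EuclideanSpace ℝ (Fin (n+1)) × EuclideanSpace ℝ (Fin (n+1)) |
        k ≠ 0 ∧ suf n k p.1 = suf n k p.2}) := by
    intro p hpA
    by_cases hst : p ∈ St
    · exact Or.inl hst
    · right
      have hst' : ¬ ∀ k : Fin (n+1), k ≠ 0 → suf n k p.1 < suf n k p.2 := hst
      push_neg at hst'
      obtain ⟨k, hk, hle⟩ := hst'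
      exact Set.mem_iUnion.2 ⟨k, hk, le_antisymm (hpA k) hle⟩
  -- main inequality 1 : 1 ≤ (n+1) μ²(A)
  have hWA : ∀ t : ℕ, (μ.prod μ) (Prod.map (rot n t) (rot n t) ⁻¹' A) = (μ.prod μ) A :=
    fun t => (hmp2 t).measure_preimage hAmeas.nullMeasurableSet
  have m1 : 1 ≤ ((n : ℝ≥0∞) + 1) * (μ.prod μ) A := by
    have h1 : (1 : ℝ≥0∞) = (μ.prod μ) (S ×ˢ S) := hG1.symm
    have h2 : (μ.prod μ) (S ×ˢ S) ≤
        ∑ t ∈ Finset.range (n+1), (μ.prod μ) (Prod.map (rot n t) (rot n t) ⁻¹' A) :=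
      le_trans (measure_mono hcover) (measure_biUnion_finset_le _ _)
    rw [Finset.sum_congr rfl (fun t _ => hWA t), Finset.sum_const, Finset.card_range,
      nsmul_eq_mul] at h2
    have h3 : ((n + 1 : ℕ) : ℝ≥0∞) = (n : ℝ≥0∞) + 1 := by push_cast; ring
    rw [h3] at h2
    calc (1 : ℝ≥0∞) = (μ.prod μ) (S ×ˢ S) := hG1.symm
      _ ≤ ((n : ℝ≥0∞) + 1) * (μ.prod μ) A := h2
  -- main inequality 2 : (n+1) μ²(St) ≤ 1
  have hWSt : ∀ t : ℕ, (μ.prod μ) (Prod.map (rot n t) (rot n t) ⁻¹' St) = (μ.prod μ) St :=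
    fun t => (hmp2 t).measure_preimage hStmeas.nullMeasurableSet
  have m2 : ((n : ℝ≥0∞) + 1) * (μ.prod μ) St ≤ 1 := by
    have hset : ∀ t : ℕ, (μ.prod μ)
        ((S ×ˢ S) ∩ (Prod.map (rot n t) (rot n t) ⁻¹' St)) = (μ.prod μ) St := by
      intro t
      rw [Set.inter_comm, measure_inter_conull hGc, hWSt t]
    have hpd : Set.PairwiseDisjoint ↑(Finset.range (n+1))
        (fun t : ℕ => (S ×ˢ S) ∩ (Prod.map (rot n t) (rot n t) ⁻¹' St)) := by
      intro t₁ h₁ t₂ h₂ hne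
      rw [Function.onFun, Set.disjoint_iff_inter_eq_empty]
      exact hdisj t₁ (Finset.mem_coe.1 h₁) t₂ (Finset.mem_coe.1 h₂) hne
    have hmeas : ∀ t ∈ Finset.range (n+1), MeasurableSet
        ((S ×ˢ S) ∩ (Prod.map (rot n t) (rot n t) ⁻¹' St)) := by
      intro t _
      exact hGmeas.inter (hStmeas.preimage ((hmp2 t).measurable))
    have h2 := measure_biUnion_finset hpd hmeas (μ := μ.prod μ)
    have h3 : (μ.prod μ) (⋃ t ∈ Finset.range (n+1),
        (S ×ˢ S) ∩ (Prod.map (rot n t) (rot n t) ⁻¹' St)) ≤ 1 := prob_le_one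
    rw [h2, Finset.sum_congr rfl (fun t _ => hset t), Finset.sum_const, Finset.card_range,
      nsmul_eq_mul] at h3
    have h4 : ((n + 1 : ℕ) : ℝ≥0∞) = (n : ℝ≥0∞) + 1 := by push_cast; ring
    rw [h4] at h3
    exact h3
  -- μ²(A) = μ²(St)
  have hab : (μ.prod μ) A ≤ (μ.prod μ) St := by
    calc (μ.prod μ) A ≤ (μ.prod μ) St + (μ.prod μ) (⋃ k : Fin (n+1),
          {p : EuclideanSpace ℝ (Fin (n+1)) × EuclideanSpace ℝ (Fin (n+1)) |
            k ≠ 0 ∧ suf n k p.1 = suf n k p.2}) :=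
        le_trans (measure_mono hAsub) (measure_union_le _ _)
      _ = (μ.prod μ) St := by rw [hUnull, add_zero]
  have hba : (μ.prod μ) St ≤ (μ.prod μ) A := by
    have hsub2 : St ⊆ A ∪ (S ×ˢ S)ᶜ := by
      intro p hp
      by_cases hg : p ∈ S ×ˢ S
      · exact Or.inl (hStsubA ⟨hg, hp⟩)
      · exact Or.inr hg
    calc (μ.prod μ) St ≤ (μ.prod μ) A + (μ.prod μ) (S ×ˢ S)ᶜ :=
        le_trans (measure_mono hsub2) (measure_union_le _ _)
      _ = (μ.prod μ) A := by rw [hGc, add_zero]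
  have haeq : (μ.prod μ) A = (μ.prod μ) St := le_antisymm hab hba
  -- conclude μ²(A) = 1/(n+1)
  have hn1ne0 : ((n : ℝ≥0∞) + 1) ≠ 0 := by
    simp
  have hn1netop : ((n : ℝ≥0∞) + 1) ≠ ∞ := by
    simp [ENNReal.add_ne_top]
  have hAval : (μ.prod μ) A = 1 / ((n : ℝ≥0∞) + 1) := by
    have heq : ((n : ℝ≥0∞) + 1) * (μ.prod μ) A = 1 :=
      le_antisymm (haeq ▸ m2) m1
    rw [ENNReal.eq_div_iff hn1ne0 hn1netop]
    exact heq
  -- the reversed event has the same measure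
  have hA'val : (μ.prod μ) A' = 1 / ((n : ℝ≥0∞) + 1) := by
    have hswap : MeasurePreserving Prod.swap (μ.prod μ) (μ.prod μ) :=
      Measure.measurePreserving_swap
    have h1 : (μ.prod μ) (Prod.swap ⁻¹' A') = (μ.prod μ) A' :=
      hswap.measure_preimage hA'meas.nullMeasurableSet
    have h2 : Prod.swap ⁻¹' A' = A := by
      ext p
      simp only [Set.mem_preimage, hA, hA', Set.mem_setOf_eq, Prod.fst_swap, Prod.snd_swap]
    rw [h2] at h1
    rw [← h1, hAval]
  -- the intersection is null
  have hintnull : (μ.prod μ) (A ∩ A') = 0 := by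
    have hk1 : ((⟨1, by omega⟩ : Fin (n+1))) ≠ 0 := by
      simp only [ne_eq, Fin.ext_iff, Fin.val_mk, Fin.val_zero]
      omega
    refine measure_mono_null ?_ (hNnull _ hk1)
    rintro p ⟨h1, h2⟩
    exact le_antisymm (h1 _) (h2 _)
  -- final computation
  have hfinal := measure_union_add_inter (μ := μ.prod μ) A hA'meas
  rw [hintnull, add_zero, hAval, hA'val] at hfinal
  rw [hfinal, ENNReal.div_add_div_same]
  norm_num
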